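/- Let G be a compact group such that G/Z(G) is torsion. Then Pr(⟨x⟩, G) > 0 for every x ∈ G. -/

import Mathlib

open MeasureTheory Pointwise

/-- `commProbC μH μG H` is the probability that a random element of the closed subgroup `H`
(with measure `μH`) commutes with a random element of `G` (with measure `μG`). -/
noncomputable def commProbC {G : Type*} [Group G] [TopologicalSpace G] [MeasurableSpace G]
    (μG : Measure G) (H : Subgroup G) (μH : Measure ↥H) : ENNReal :=
  (μH.prod μG) {p : ↥H × G | Commute (p.1 : G) p.2}

/-- If `G` is a compact group with `G/Z(G)` torsion, then `Pr(⟨x⟩, G) > 0` for every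
`x ∈ G`, with respect to normalized Haar measures. -/
theorem stmt9 {G : Type*} [Group G] [TopologicalSpace G] [IsTopologicalGroup G]
    [CompactSpace G] [T2Space G] [MeasurableSpace G] [BorelSpace G]
    (μG : Measure G) (hμG : μG.IsHaarMeasure) (hμG1 : IsProbabilityMeasure μG)
    (htor : ∀ g : G, ∃ n : ℕ, 0 < n ∧ g ^ n ∈ Subgroup.center G) :
    ∀ x : G, ∀ μH : Measure ↥((Subgroup.closure {x}).topologicalClosure),
      μH.IsHaarMeasure → IsProbabilityMeasure μH →
      0 < commProbC μG (Subgroup.closure {x}).topologicalClosure μH := by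
  intro x μH hμH hμH1
  haveI := hμG1
  haveI : IsProbabilityMeasure μH := hμH1
  haveI : μH.IsMulLeftInvariant := hμH.toIsMulLeftInvariant
  obtain ⟨n, hn, hcen⟩ := htor x
  have hxH : x ∈ (Subgroup.closure {x}).topologicalClosure :=
    Subgroup.le_topologicalClosure _ (Subgroup.subset_closure rfl)
  let H : Subgroup G := (Subgroup.closure {x}).topologicalClosure
  let y : ↥H := ⟨x, hxH⟩
  -- the center of G is closed
  have hZclosed : IsClosed ((Subgroup.center G : Set G)) := by
    have : ((Subgroup.center G : Set G)) = ⋂ g : G, {z : G | g * z = z * g} := by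
      ext z
      simp [Subgroup.mem_center_iff, Set.mem_iInter]
    rw [this]
    exact isClosed_iInter fun g => isClosed_eq (by fun_prop) (by fun_prop)
  set D : Subgroup ↥H := (Subgroup.center G).comap H.subtype with hDdef
  have hDclosed : IsClosed (D : Set ↥H) := hZclosed.preimage continuous_subtype_val
  set K : Subgroup ↥H := (Subgroup.closure {y ^ n}).topologicalClosure with hKdef
  have hynK : y ^ n ∈ K :=
    Subgroup.le_topologicalClosure _ (Subgroup.subset_closure rfl)
  have hKD : K ≤ D := by
    apply Subgroup.topologicalClosure_minimal
    · rw [Subgroup.closure_le]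
      intro a ha
      rw [Set.mem_singleton_iff] at ha
      subst ha
      show ((y : G)) ^ n ∈ Subgroup.center G
      exact hcen
    · exact hDclosed
  have hKclosed : IsClosed (K : Set ↥H) := Subgroup.isClosed_topologicalClosure _
  set U : Set ↥H := ⋃ i ∈ Finset.range n, (y ^ i) • (K : Set ↥H) with hUdef
  have hUclosed : IsClosed U :=
    Set.Finite.isClosed_biUnion (Finset.range n).finite_toSet
      fun i _ => hKclosed.smul _
  -- the cyclic subgroup generated by y is contained in U
  have hyU : ((Subgroup.closure {y} : Subgroup ↥H) : Set ↥H) ⊆ U := by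
    intro a ha
    rw [SetLike.mem_coe, Subgroup.mem_closure_singleton] at ha
    obtain ⟨k, hk⟩ := ha
    have hr0 : 0 ≤ k % (n : ℤ) := Int.emod_nonneg k (by exact_mod_cast hn.ne')
    have hrn : k % (n : ℤ) < (n : ℤ) := Int.emod_lt_of_pos k (by exact_mod_cast hn)
    set r : ℕ := (k % (n : ℤ)).toNat with hrdef
    have hrz : (r : ℤ) = k % (n : ℤ) := Int.toNat_of_nonneg hr0
    have hrlt : r < n := by omega
    have hdecomp : a = y ^ r * (y ^ n) ^ (k / (n : ℤ)) := by
      rw [← hk, ← zpow_natCast y r, ← zpow_natCast y n, ← zpow_mul, ← zpow_add]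
      congr 1
      have := Int.mul_ediv_add_emod k (n : ℤ)
      omega
    have hmem : (y ^ n) ^ (k / (n : ℤ)) ∈ K := zpow_mem hynK _
    have : a ∈ (y ^ r) • (K : Set ↥H) := ⟨_, hmem, hdecomp.symm⟩
    exact Set.mem_biUnion (Finset.mem_range.mpr hrlt) this
  -- the closure of the cyclic subgroup generated by y is everything
  have hUuniv : U = Set.univ := by
    apply Set.eq_univ_of_forall
    intro h
    have hdense : h ∈ closure ((Subgroup.closure {y} : Subgroup ↥H) : Set ↥H) := by
      rw [closure_subtype]
      have himg : Subtype.val '' ((Subgroup.closure {y} : Subgroup ↥H) : Set ↥H)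
          = ((Subgroup.closure {x} : Subgroup G) : Set G) := by
        calc Subtype.val '' ((Subgroup.closure {y} : Subgroup ↥H) : Set ↥H)
            = ⇑H.subtype '' ((Subgroup.closure {y} : Subgroup ↥H) : Set ↥H) := rfl
          _ = (((Subgroup.closure {y}).map H.subtype : Subgroup G) : Set G) :=
              (Subgroup.coe_map _ _).symm
          _ = ((Subgroup.closure {x} : Subgroup G) : Set G) := by
              rw [MonoidHom.map_closure]
              simp
              rfl
      rw [himg, ← Subgroup.topologicalClosure_coe]
      exact h.2
    exact closure_minimal hyU hUclosed hdense
  -- μH K > 0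
  have hK0 : 0 < μH (K : Set ↥H) := by
    rcases eq_or_ne (μH (K : Set ↥H)) 0 with h0 | h0
    · exfalso
      have h1 : μH Set.univ = 1 := measure_univ
      have h2 : μH U ≤ ∑ i ∈ Finset.range n, μH ((y ^ i) • (K : Set ↥H)) :=
        measure_biUnion_finset_le _ _
      have h3 : ∀ i, μH ((y ^ i) • (K : Set ↥H)) = 0 := by
        intro i
        rw [measure_smul]
        exact h0
      simp only [h3, Finset.sum_const_zero] at h2
      rw [hUuniv, h1] at h2
      exact one_ne_zero (le_antisymm h2 zero_le)
    · exact h0.bot_lt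
  -- conclude
  have hDsub : ((D : Set ↥H) ×ˢ (Set.univ : Set G)) ⊆
      {p : ↥H × G | Commute ((p.1 : ↥H) : G) p.2} := by
    rintro ⟨h, g⟩ ⟨hh, -⟩
    exact ((Subgroup.mem_center_iff.1 hh) g).symm
  have hprod : (μH.prod μG) ((D : Set ↥H) ×ˢ (Set.univ : Set G))
      = μH (D : Set ↥H) * μG Set.univ := Measure.prod_prod _ _
  have hfinal : 0 < (μH.prod μG) ((D : Set ↥H) ×ˢ (Set.univ : Set G)) := by
    rw [hprod, measure_univ, mul_one]
    exact lt_of_lt_of_le hK0 (measure_mono hKD)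
  simp only [commProbC]
  exact lt_of_lt_of_le hfinal (measure_mono hDsub)
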